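/- Let Ω be a positive definite real d×d matrix, C a real a×d matrix with linearly independent rows, and S a real d×b matrix with b ↦ S·b injective, such that {x ∈ ℝ^d : C·x = 0} = {S·b : b ∈ ℝ^b}. Then I_d − Ω·Cᵀ·(C·Ω·Cᵀ)⁻¹·C = S·(Sᵀ·Ω⁻¹·S)⁻¹·Sᵀ·Ω⁻¹; i.e., the zero-constrained (projection) representation of optimal reconciliation and the structural representation M = S·G with G = (Sᵀ·Ω⁻¹·S)⁻¹·Sᵀ·Ω⁻¹ coincide. -/

import Mathlib

open Matrix

/-- Conjugation of a positive definite real matrix by a matrix with injective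
`mulVec` is positive definite. -/
lemma posDef_conj_of_injective {n m : ℕ} {A : Matrix (Fin n) (Fin n) ℝ} (hA : A.PosDef)
    (B : Matrix (Fin n) (Fin m) ℝ) (hB : Function.Injective B.mulVec) :
    (Bᵀ * A * B).PosDef := by
  constructor
  · have h := Matrix.isHermitian_conjTranspose_mul_mul B hA.1
    simpa using h
  · have h := (hA.conjTranspose_mul_mul_same hB).2
    simpa [Matrix.conjTranspose_eq_transpose_of_trivial] using h

theorem projection_eq_structural {d a b : ℕ}
    (Ω : Matrix (Fin d) (Fin d) ℝ) (hΩ : Ω.PosDef)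
    (C : Matrix (Fin a) (Fin d) ℝ) (hC : Function.Injective Cᵀ.mulVec)
    (S : Matrix (Fin d) (Fin b) ℝ) (hS : Function.Injective S.mulVec)
    (hker : {x : Fin d → ℝ | C.mulVec x = 0} = {x : Fin d → ℝ | ∃ b₀ : Fin b → ℝ, x = S.mulVec b₀}) :
    (1 : Matrix (Fin d) (Fin d) ℝ) - Ω * Cᵀ * (C * Ω * Cᵀ)⁻¹ * C
      = S * (Sᵀ * Ω⁻¹ * S)⁻¹ * Sᵀ * Ω⁻¹ := by
  -- Basic invertibility facts
  have hΩu : IsUnit Ω := hΩ.isUnit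
  have hΩinv : Ω⁻¹.PosDef := hΩ.inv
  -- C * Ω * Cᵀ is positive definite
  have hCΩC : (C * Ω * Cᵀ).PosDef := by
    have := posDef_conj_of_injective hΩ Cᵀ hC
    simpa [Matrix.transpose_transpose] using this
  have hSΩS : (Sᵀ * Ω⁻¹ * S).PosDef := posDef_conj_of_injective hΩinv S hS
  have hCΩCu : IsUnit (C * Ω * Cᵀ) := hCΩC.isUnit
  have hSΩSu : IsUnit (Sᵀ * Ω⁻¹ * S) := hSΩS.isUnit
  -- C * S = 0
  have hCS : C * S = 0 := by
    have h : ∀ y : Fin b → ℝ, C *ᵥ (S *ᵥ y) = 0 := by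
      intro y
      have : S *ᵥ y ∈ {x : Fin d → ℝ | ∃ b₀ : Fin b → ℝ, x = S.mulVec b₀} := ⟨y, rfl⟩
      rw [← hker] at this
      exact this
    apply Matrix.toLin'.injective
    apply LinearMap.ext
    intro y
    simp only [Matrix.toLin'_apply, map_zero, LinearMap.zero_apply]
    rw [← Matrix.mulVec_mulVec]
    exact h y
  -- abbreviations
  set M₁ : Matrix (Fin d) (Fin d) ℝ := 1 - Ω * Cᵀ * (C * Ω * Cᵀ)⁻¹ * C with hM₁
  set M₂ : Matrix (Fin d) (Fin d) ℝ := S * (Sᵀ * Ω⁻¹ * S)⁻¹ * Sᵀ * Ω⁻¹ with hM₂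
  -- action on S
  have hM₁S : M₁ * S = S := by
    rw [hM₁, Matrix.sub_mul, Matrix.one_mul]
    have : Ω * Cᵀ * (C * Ω * Cᵀ)⁻¹ * C * S = Ω * Cᵀ * (C * Ω * Cᵀ)⁻¹ * (C * S) := by
      rw [Matrix.mul_assoc]
    rw [this, hCS, Matrix.mul_zero, sub_zero]
  have hM₂S : M₂ * S = S := by
    rw [hM₂]
    have : S * (Sᵀ * Ω⁻¹ * S)⁻¹ * Sᵀ * Ω⁻¹ * S = S * ((Sᵀ * Ω⁻¹ * S)⁻¹ * (Sᵀ * Ω⁻¹ * S)) := by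
      simp only [Matrix.mul_assoc]
    rw [this, Matrix.nonsing_inv_mul _ (hSΩSu.map Matrix.detMonoidHom), Matrix.mul_one]
  -- action on Ω * Cᵀ
  have hM₁W : M₁ * (Ω * Cᵀ) = 0 := by
    rw [hM₁, Matrix.sub_mul, Matrix.one_mul]
    have : Ω * Cᵀ * (C * Ω * Cᵀ)⁻¹ * C * (Ω * Cᵀ) = Ω * Cᵀ * ((C * Ω * Cᵀ)⁻¹ * (C * Ω * Cᵀ)) := by
      simp only [Matrix.mul_assoc]
    rw [this, Matrix.nonsing_inv_mul _ (hCΩCu.map Matrix.detMonoidHom), Matrix.mul_one, sub_self]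
  have hM₂W : M₂ * (Ω * Cᵀ) = 0 := by
    rw [hM₂]
    have h1 : S * (Sᵀ * Ω⁻¹ * S)⁻¹ * Sᵀ * Ω⁻¹ * (Ω * Cᵀ)
        = S * (Sᵀ * Ω⁻¹ * S)⁻¹ * (Sᵀ * ((Ω⁻¹ * Ω) * Cᵀ)) := by
      simp only [Matrix.mul_assoc]
    rw [h1, Matrix.nonsing_inv_mul _ (hΩu.map Matrix.detMonoidHom), Matrix.one_mul]
    have h2 : Sᵀ * Cᵀ = (C * S)ᵀ := by rw [Matrix.transpose_mul]
    rw [h2, hCS, Matrix.transpose_zero, Matrix.mul_zero]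
  -- Now the span argument: range S.mulVecLin ⊔ range (Ω*Cᵀ).mulVecLin = ⊤
  have hΩinj : Function.Injective Ω.mulVec := Matrix.mulVec_injective_iff_isUnit.mpr hΩu
  have hWinj : Function.Injective (Ω * Cᵀ).mulVec := by
    intro x y hxy
    apply hC
    apply hΩinj
    rw [Matrix.mulVec_mulVec, Matrix.mulVec_mulVec]
    exact hxy
  have hkerS : LinearMap.ker C.mulVecLin = LinearMap.range S.mulVecLin := by
    ext x
    constructor
    · intro hx
      have : x ∈ {x : Fin d → ℝ | C.mulVec x = 0} := hx
      rw [hker] at this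
      obtain ⟨y, hy⟩ := this
      exact ⟨y, hy.symm⟩
    · rintro ⟨y, rfl⟩
      have : S *ᵥ y ∈ {x : Fin d → ℝ | ∃ b₀ : Fin b → ℝ, x = S.mulVec b₀} := ⟨y, rfl⟩
      rw [← hker] at this
      exact this
  have hfinS : Module.finrank ℝ (LinearMap.range S.mulVecLin) = b := by
    rw [LinearMap.finrank_range_of_inj (by exact hS)]
    simp [Module.finrank_fin_fun]
  have hfinW : Module.finrank ℝ (LinearMap.range (Ω * Cᵀ).mulVecLin) = a := by
    rw [LinearMap.finrank_range_of_inj (by exact hWinj)]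
    simp [Module.finrank_fin_fun]
  have hfinCT : Cᵀ.rank = a := by
    rw [Matrix.rank, LinearMap.finrank_range_of_inj (by exact hC)]
    simp [Module.finrank_fin_fun]
  have hab : a + b = d := by
    have hrn := LinearMap.finrank_range_add_finrank_ker C.mulVecLin
    rw [hkerS, hfinS] at hrn
    have hrC : Module.finrank ℝ (LinearMap.range C.mulVecLin) = a := by
      have : C.rank = a := by rw [← Matrix.rank_transpose]; exact hfinCT
      exact this
    rw [hrC] at hrn
    simpa [Module.finrank_fin_fun] using hrn
  have hdisj : Disjoint (LinearMap.range S.mulVecLin) (LinearMap.range (Ω * Cᵀ).mulVecLin) := by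
    rw [Submodule.disjoint_def]
    intro x hxS hxW
    obtain ⟨u, hu⟩ := hxS
    obtain ⟨v, hv⟩ := hxW
    simp only [Matrix.mulVecLin_apply] at hu hv
    have hCx : C *ᵥ x = 0 := by
      have : x ∈ LinearMap.ker C.mulVecLin := by
        rw [hkerS]; exact ⟨u, hu⟩
      exact this
    have hv0 : v = 0 := by
      have h1 : (C * Ω * Cᵀ) *ᵥ v = 0 := by
        have : (C * Ω * Cᵀ) *ᵥ v = C *ᵥ ((Ω * Cᵀ) *ᵥ v) := by
          rw [Matrix.mulVec_mulVec, Matrix.mul_assoc]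
        rw [this, hv, hCx]
      have hinj : Function.Injective (C * Ω * Cᵀ).mulVec :=
        Matrix.mulVec_injective_iff_isUnit.mpr hCΩCu
      have := hinj (h1.trans (Matrix.mulVec_zero _).symm)
      exact this
    rw [← hv, hv0, Matrix.mulVec_zero]
  have hsup : LinearMap.range S.mulVecLin ⊔ LinearMap.range (Ω * Cᵀ).mulVecLin = ⊤ := by
    apply Submodule.eq_top_of_finrank_eq
    have h := Submodule.finrank_sup_add_finrank_inf_eq
      (LinearMap.range S.mulVecLin) (LinearMap.range (Ω * Cᵀ).mulVecLin)
    rw [hdisj.eq_bot, finrank_bot, add_zero, hfinS, hfinW] at h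
    rw [h]
    simp [Module.finrank_fin_fun, ← hab, Nat.add_comm]
  -- Conclude
  show M₁ = M₂
  apply Matrix.toLin'.injective
  apply LinearMap.ext
  intro x
  have hx : x ∈ LinearMap.range S.mulVecLin ⊔ LinearMap.range (Ω * Cᵀ).mulVecLin := by
    rw [hsup]; trivial
  obtain ⟨y, ⟨u, hu⟩, z, ⟨v, hv⟩, hyz⟩ := Submodule.mem_sup.mp hx
  simp only [Matrix.toLin'_apply]
  have key : ∀ M : Matrix (Fin d) (Fin d) ℝ, M * S = S → M * (Ω * Cᵀ) = 0 →
      M *ᵥ x = S *ᵥ u := by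
    intro M hMS hMW
    rw [← hyz, ← hu, ← hv, Matrix.mulVec_add, Matrix.mulVecLin_apply, Matrix.mulVecLin_apply,
      Matrix.mulVec_mulVec, Matrix.mulVec_mulVec, hMS, hMW, Matrix.zero_mulVec, add_zero]
  rw [key M₁ hM₁S hM₁W, key M₂ hM₂S hM₂W]
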